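/- For every $s$ with $\tfrac{1}{2} \leq s < \tfrac{13}{18}$ there exists a constant $C > 0$ such that for all nonzero integers $n_1, n_2$ with $n := n_1 + n_2 \neq 0$: $\frac{\langle n\rangle^{s-1}\, |n|\, \langle n_1\rangle^{s}\, \langle n_2\rangle^{s}}{\langle n_{\max}\rangle^{5/3}\, \langle n_{\min}\rangle} \;\leq\; C\, \langle n_{\max}\rangle^{3s - 13/6}\, \langle n_{\min}\rangle^{-1/2}$, where $n_{\max} := \max(|n_1|, |n_2|)$ and $n_{\min} := \min(|n_1|, |n_2|)$. -/
import Mathlib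

noncomputable def jb (m : ℤ) : ℝ := Real.sqrt (1 + (m : ℝ) ^ 2)

lemma jb_pos (m : ℤ) : 0 < jb m := Real.sqrt_pos.2 (by positivity)

lemma one_le_jb (m : ℤ) : 1 ≤ jb m := by
  rw [show (1:ℝ) = Real.sqrt 1 by simp]
  exact Real.sqrt_le_sqrt (by nlinarith [sq_nonneg ((m:ℤ):ℝ)])

lemma abs_le_jb (m : ℤ) : |((m:ℤ):ℝ)| ≤ jb m := by
  rw [← Real.sqrt_sq_eq_abs]
  exact Real.sqrt_le_sqrt (by nlinarith)

lemma jb_mono {m m' : ℤ} (h : |m| ≤ |m'|) : jb m ≤ jb m' := by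
  apply Real.sqrt_le_sqrt
  have h' : |(m:ℝ)| ≤ |(m':ℝ)| := by exact_mod_cast h
  nlinarith [abs_nonneg (m:ℝ), sq_abs (m:ℝ), sq_abs (m':ℝ)]

lemma jb_abs (m : ℤ) : jb |m| = jb m := by
  unfold jb
  rw [show ((|m|:ℤ):ℝ) = |(m:ℝ)| by exact_mod_cast rfl, sq_abs]

lemma jb_add_le (n₁ n₂ : ℤ) : jb (n₁ + n₂) ≤ 2 * jb (max |n₁| |n₂|) := by
  have h1 : |(n₁:ℝ)| ≤ ((max |n₁| |n₂| : ℤ) : ℝ) := by exact_mod_cast le_max_left |n₁| |n₂|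
  have h2 : |(n₂:ℝ)| ≤ ((max |n₁| |n₂| : ℤ) : ℝ) := by exact_mod_cast le_max_right |n₁| |n₂|
  have h3 := abs_add_le (n₁:ℝ) (n₂:ℝ)
  have h4 : |(n₁:ℝ) + n₂| ≤ 2 * ((max |n₁| |n₂| : ℤ) : ℝ) := by linarith
  unfold jb
  rw [show (2:ℝ) = Real.sqrt 4 by
        rw [show (4:ℝ) = 2^2 by norm_num, Real.sqrt_sq (by norm_num)],
      ← Real.sqrt_mul (by norm_num)]
  apply Real.sqrt_le_sqrt
  push_cast
  push_cast at h4
  nlinarith [sq_abs ((n₁:ℝ) + n₂), abs_nonneg ((n₁:ℝ) + n₂)]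

theorem stmt_13 :
    ∀ s : ℝ, 1/2 ≤ s → s < 13/18 →
      ∃ C : ℝ, 0 < C ∧ ∀ n₁ n₂ : ℤ, n₁ ≠ 0 → n₂ ≠ 0 → n₁ + n₂ ≠ 0 →
        jb (n₁ + n₂) ^ (s - 1) * |((n₁ + n₂ : ℤ) : ℝ)| * jb n₁ ^ s * jb n₂ ^ s
            / (jb (max |n₁| |n₂|) ^ ((5:ℝ)/3) * jb (min |n₁| |n₂|))
          ≤ C * jb (max |n₁| |n₂|) ^ (3*s - 13/6) * jb (min |n₁| |n₂|) ^ (-(1:ℝ)/2) := by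
  intro s hs1 hs2
  refine ⟨2, by norm_num, ?_⟩
  intro n₁ n₂ h₁ h₂ h
  set a := jb (max |n₁| |n₂|) with ha
  set b := jb (min |n₁| |n₂|) with hb
  set N := jb (n₁ + n₂) with hN
  have ha0 : (0:ℝ) < a := jb_pos _
  have hb0 : (0:ℝ) < b := jb_pos _
  have hN0 : (0:ℝ) < N := jb_pos _
  have hmn : (0:ℤ) ≤ min |n₁| |n₂| := le_min (abs_nonneg _) (abs_nonneg _)
  have hba : b ≤ a := jb_mono (by
    rw [abs_of_nonneg hmn, abs_of_nonneg (hmn.trans min_le_max)]; exact min_le_max)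
  have hxN : |((n₁ + n₂ : ℤ):ℝ)| ≤ N := abs_le_jb _
  have hN2a : N ≤ 2 * a := jb_add_le n₁ n₂
  have hprod : jb n₁ ^ s * jb n₂ ^ s = a ^ s * b ^ s := by
    rcases le_total |n₁| |n₂| with hle | hle
    · rw [ha, hb, max_eq_right hle, min_eq_left hle, jb_abs, jb_abs]; ring
    · rw [ha, hb, max_eq_left hle, min_eq_right hle, jb_abs, jb_abs]
  have hkey : b ^ (s - 1/2) ≤ a ^ (s - 1/2) :=
    Real.rpow_le_rpow (le_of_lt hb0) hba (by linarith)
  have h5 : N ^ (s - 1) * |((n₁ + n₂ : ℤ):ℝ)| ≤ N ^ s := by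
    calc N ^ (s - 1) * |((n₁ + n₂ : ℤ):ℝ)| ≤ N ^ (s - 1) * N :=
          mul_le_mul_of_nonneg_left hxN (by positivity)
      _ = N ^ s := by
          rw [← Real.rpow_add_one (ne_of_gt hN0), show s - 1 + 1 = s by ring]
  have e1 : b ^ s = b ^ ((1:ℝ)/2) * b ^ (s - 1/2) := by
    rw [← Real.rpow_add hb0, show (1:ℝ)/2 + (s - 1/2) = s by ring]
  have e2 : a ^ (3*s - 13/6) * a ^ ((5:ℝ)/3) = a ^ (2*s) * a ^ (s - 1/2) := by
    rw [← Real.rpow_add ha0, ← Real.rpow_add ha0]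
    congr 1; ring
  have e3 : b ^ (-(1:ℝ)/2) * b = b ^ ((1:ℝ)/2) := by
    nth_rewrite 2 [← Real.rpow_one b]
    rw [← Real.rpow_add hb0]; norm_num
  have final : 2 * a ^ (2*s) * b ^ s
      ≤ 2 * a ^ (3*s - 13/6) * b ^ (-(1:ℝ)/2) * (a ^ ((5:ℝ)/3) * b) := by
    have hr : 2 * a ^ (3*s - 13/6) * b ^ (-(1:ℝ)/2) * (a ^ ((5:ℝ)/3) * b)
        = 2 * (a ^ (2*s) * a ^ (s - 1/2)) * b ^ ((1:ℝ)/2) := by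
      calc 2 * a ^ (3*s - 13/6) * b ^ (-(1:ℝ)/2) * (a ^ ((5:ℝ)/3) * b)
          = 2 * (a ^ (3*s - 13/6) * a ^ ((5:ℝ)/3)) * (b ^ (-(1:ℝ)/2) * b) := by ring
        _ = _ := by rw [e2, e3]
    rw [hr, e1]
    calc 2 * a ^ (2*s) * (b ^ ((1:ℝ)/2) * b ^ (s - 1/2))
        ≤ 2 * a ^ (2*s) * (b ^ ((1:ℝ)/2) * a ^ (s - 1/2)) := by gcongr
      _ = 2 * (a ^ (2*s) * a ^ (s - 1/2)) * b ^ ((1:ℝ)/2) := by ring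
  rw [div_le_iff₀ (by positivity)]
  calc N ^ (s - 1) * |((n₁ + n₂ : ℤ):ℝ)| * jb n₁ ^ s * jb n₂ ^ s
      = (N ^ (s - 1) * |((n₁ + n₂ : ℤ):ℝ)|) * (a ^ s * b ^ s) := by
        rw [mul_assoc, hprod]
    _ ≤ N ^ s * (a ^ s * b ^ s) := mul_le_mul_of_nonneg_right h5 (by positivity)
    _ ≤ (2 ^ s * a ^ s) * (a ^ s * b ^ s) := by
        have := Real.rpow_le_rpow (le_of_lt hN0) hN2a (by linarith : (0:ℝ) ≤ s)
        rw [Real.mul_rpow (by norm_num) (le_of_lt ha0)] at this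
        exact mul_le_mul_of_nonneg_right this (by positivity)
    _ ≤ (2 * a ^ s) * (a ^ s * b ^ s) := by
        have h2s : (2:ℝ) ^ s ≤ 2 := by
          have := Real.rpow_le_rpow_of_exponent_le (by norm_num : (1:ℝ) ≤ 2)
            (by linarith : s ≤ 1)
          simpa using this
        gcongr
    _ = 2 * a ^ (2*s) * b ^ s := by
        rw [show 2*s = s + s by ring, Real.rpow_add ha0]; ring
    _ ≤ 2 * a ^ (3*s - 13/6) * b ^ (-(1:ℝ)/2) * (a ^ ((5:ℝ)/3) * b) := final
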